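/- There is a homeomorphism h : C → K such that h(d) = σ(d) for every d ∈ D and h[V_d] = K ∩ W(d) for every d ∈ D; in particular K is homeomorphic to the Cantor space 2^ℕ. -/

import Mathlib

open Set Topology

/-- The Cantor space `2^ℕ`, with coordinates indexed by the positive integers. -/
abbrev Cant : Type := ℕ+ → Bool

/-- The support of a point of the Cantor space, as a set of (positive) natural numbers. -/
def ksupp (x : Cant) : Set ℕ := {i | ∃ h : 0 < i, x ⟨i, h⟩ = true}

/-- The plane. -/
abbrev Plane : Type := EuclideanSpace ℝ (Fin 2)

/-- `N_d = max supp d` (with `sSup ∅ = 0` for the zero point). -/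
noncomputable def Nd (d : Cant) : ℕ := sSup (ksupp d)

/-- The basic clopen set `V_d = {y : y(i) = d(i) for 1 ≤ i ≤ N_d}`. -/
noncomputable def Vd (d : Cant) : Set Cant :=
  {y | ∀ i : ℕ+, (i : ℕ) ≤ Nd d → y i = d i}

/-- The set `D_d` of children of `d ∈ D`: the points of `D_{k_d+1}` agreeing with `d`
on the coordinates `1, …, N_d`. -/
noncomputable def Dch (d : Cant) : Set Cant :=
  {e | (ksupp e).Finite ∧ (ksupp e).ncard = (ksupp d).ncard + 1 ∧
    ∀ i : ℕ+, (i : ℕ) ≤ Nd d → e i = d i}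

/-- The ball `W(d) = B(σ(d), 2^{−ℓ(d)})`. -/
noncomputable def Wb (σ : Cant → Plane) (ℓ : Cant → ℕ) (d : Cant) : Set Plane :=
  Metric.ball (σ d) ((2 : ℝ) ^ (-(ℓ d : ℤ)))

/-- The ball `U(d) = B(σ(d), 2^{−ℓ(d)−1})`. -/
noncomputable def Ub (σ : Cant → Plane) (ℓ : Cant → ℕ) (d : Cant) : Set Plane :=
  Metric.ball (σ d) ((2 : ℝ) ^ (-(ℓ d : ℤ) - 1))

/-- The resulting Cantor set `K = ⋂_n cl (⋃ {W(d) : d ∈ D_n})`. -/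
noncomputable def Kset (σ : Cant → Plane) (ℓ : Cant → ℕ) : Set Plane :=
  ⋂ n : ℕ, closure (⋃ d ∈ {d : Cant | (ksupp d).Finite ∧ (ksupp d).ncard = n}, Wb σ ℓ d)

/-- The closed set `F(d) = cl U(d) \ ⋃_{e ∈ D_d} W(e)`. -/
noncomputable def Fd (σ : Cant → Plane) (ℓ : Cant → ℕ) (d : Cant) : Set Plane :=
  closure (Ub σ ℓ d) \ ⋃ e ∈ Dch d, Wb σ ℓ e

/-- The three conditions imposed on the maps `σ : D → ℝ²` and `ℓ : D → ω`:
(1) `⟨σ(e) : e ∈ D_d⟩` converges to `σ(d)` (in the sense that `σ(e)` is close to `σ(d)`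
    once the added support element `N_e` of the child `e` is large);
(2) `cl W(e) ⊆ U(d) \ {σ(d)}` whenever `e ∈ D_d`;
(3) `{cl W(d) : d ∈ D_n}` is pairwise disjoint for every `n`. -/
def CantorConds (σ : Cant → Plane) (ℓ : Cant → ℕ) : Prop :=
  (∀ d : Cant, (ksupp d).Finite → ∀ ε > (0 : ℝ), ∃ M : ℕ, ∀ e ∈ Dch d,
      M ≤ Nd e → dist (σ e) (σ d) < ε) ∧
  (∀ d : Cant, (ksupp d).Finite → ∀ e ∈ Dch d,
      closure (Wb σ ℓ e) ⊆ Ub σ ℓ d \ {σ d}) ∧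
  (∀ n : ℕ, ∀ d e : Cant, (ksupp d).Finite → (ksupp d).ncard = n →
      (ksupp e).Finite → (ksupp e).ncard = n → d ≠ e →
      Disjoint (closure (Wb σ ℓ d)) (closure (Wb σ ℓ e)))

namespace CP

/-- ℕ-indexed view of a Cantor point. -/
def X (x : Cant) (n : ℕ) : Bool := if h : 0 < n then x ⟨n, h⟩ else false

lemma X_coe (x : Cant) (i : ℕ+) : X x (i : ℕ) = x i := by
  unfold X
  rw [dif_pos i.pos]
  congr 1

lemma X_zero (x : Cant) : X x 0 = false := rfl

lemma ksupp_eq (x : Cant) : ksupp x = {n | X x n = true} := by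
  ext n
  simp only [ksupp, mem_setOf_eq, X]
  constructor
  · rintro ⟨h, hx⟩; rw [dif_pos h]; exact hx
  · intro h
    by_cases hn : 0 < n
    · rw [dif_pos hn] at h; exact ⟨hn, h⟩
    · rw [dif_neg hn] at h; exact absurd h (by simp)

lemma mem_ksupp {x : Cant} {n : ℕ} : n ∈ ksupp x ↔ X x n = true := by
  rw [ksupp_eq]; rfl

lemma cant_ext {x y : Cant} (h : ∀ n, X x n = X y n) : x = y := by
  funext i
  have := h (i : ℕ)
  rwa [X_coe, X_coe] at this

lemma pos_of_X {x : Cant} {n : ℕ} (h : X x n = true) : 0 < n := by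
  by_contra hn
  rw [X, dif_neg hn] at h
  exact absurd h (by simp)

/-- number of support elements ≤ m -/
def cnt (x : Cant) (m : ℕ) : ℕ := ((Finset.range (m+1)).filter (fun j => X x j = true)).card

lemma cnt_zero (x : Cant) : cnt x 0 = 0 := by
  unfold cnt
  rw [Finset.range_one, Finset.filter_singleton, if_neg (by simp [X_zero])]
  rfl

lemma cnt_succ (x : Cant) (m : ℕ) :
    cnt x (m+1) = cnt x m + (if X x (m+1) = true then 1 else 0) := by
  unfold cnt
  rw [Finset.range_add_one, Finset.filter_insert]
  split
  · rw [Finset.card_insert_of_notMem (by simp), add_comm]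
  · simp

lemma cnt_mono (x : Cant) : Monotone (cnt x) := by
  apply monotone_nat_of_le_succ
  intro m
  rw [cnt_succ]
  omega

lemma cnt_lt_of {x : Cant} {i j : ℕ} (hij : i < j) (hj : X x j = true) :
    cnt x i < cnt x j := by
  obtain ⟨m, rfl⟩ : ∃ m, j = m + 1 := ⟨j - 1, by have := pos_of_X hj; omega⟩
  have h1 : cnt x i ≤ cnt x m := cnt_mono x (by omega)
  rw [cnt_succ, if_pos hj]
  omega

lemma one_le_cnt {x : Cant} {m : ℕ} (h : X x m = true) : 1 ≤ cnt x m := by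
  have h0 := cnt_lt_of (pos_of_X h) h
  rw [cnt_zero] at h0
  omega

lemma cnt_agree {x y : Cant} {M : ℕ} (h : ∀ j ≤ M, X x j = X y j) :
    ∀ m ≤ M, cnt x m = cnt y m := by
  intro m hm
  unfold cnt
  congr 1
  apply Finset.filter_congr
  intro j hj
  rw [Finset.mem_range] at hj
  rw [h j (by omega)]

lemma cnt_le_card {x : Cant} (hf : (ksupp x).Finite) (m : ℕ) :
    cnt x m ≤ (ksupp x).ncard := by
  rw [Set.ncard_eq_toFinset_card _ hf]
  apply Finset.card_le_card
  intro a ha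
  simp only [Finset.mem_filter] at ha
  simp only [Set.Finite.mem_toFinset, mem_ksupp]
  exact ha.2

lemma cnt_eq_card {x : Cant} (hf : (ksupp x).Finite) {M : ℕ}
    (hM : ∀ i ∈ ksupp x, i ≤ M) : cnt x M = (ksupp x).ncard := by
  rw [Set.ncard_eq_toFinset_card _ hf]
  have he : (Finset.range (M+1)).filter (fun j => X x j = true) = hf.toFinset := by
    ext a
    simp only [Finset.mem_filter, Finset.mem_range, Set.Finite.mem_toFinset, mem_ksupp]
    constructor
    · exact fun h => h.2
    · intro h
      exact ⟨by have := hM a (mem_ksupp.mpr h); omega, h⟩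
  rw [cnt, he]

end CP
namespace CP

def trunc (n : ℕ) (x : Cant) : Cant := fun i => x i && decide (cnt x (i : ℕ) ≤ n)

lemma X_trunc (n : ℕ) (x : Cant) (m : ℕ) :
    X (trunc n x) m = (X x m && decide (cnt x m ≤ n)) := by
  by_cases h : 0 < m
  · simp only [X, dif_pos h]
    rfl
  · have hm : m = 0 := by omega
    subst hm
    rw [X_zero, X_zero, Bool.false_and]

lemma mem_supp_trunc {n : ℕ} {x : Cant} {m : ℕ} :
    X (trunc n x) m = true ↔ X x m = true ∧ cnt x m ≤ n := by
  rw [X_trunc]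
  simp

lemma supp_trunc_sub (n : ℕ) (x : Cant) : ksupp (trunc n x) ⊆ ksupp x := by
  intro m hm
  rw [mem_ksupp] at *
  exact (mem_supp_trunc.mp hm).1

lemma trunc_eq_self {n : ℕ} {x : Cant} (h : ∀ m, cnt x m ≤ n) : trunc n x = x := by
  apply cant_ext
  intro m
  rw [X_trunc, decide_eq_true (h m), Bool.and_true]

/-- `x` has at least `n` support elements. -/
def hasn (n : ℕ) (x : Cant) : Prop := ∃ m, n ≤ cnt x m

lemma hasn_zero (x : Cant) : hasn 0 x := ⟨0, by omega⟩

lemma hasn_mono {n n' : ℕ} {x : Cant} (h : n' ≤ n) (hn : hasn n x) : hasn n' x := by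
  obtain ⟨m, hm⟩ := hn
  exact ⟨m, by omega⟩

lemma trunc_eq_self_of_not_hasn {n : ℕ} {x : Cant} (h : ¬ hasn (n+1) x) : trunc n x = x := by
  apply trunc_eq_self
  intro m
  by_contra hm
  exact h ⟨m, by omega⟩

lemma hasn_of_infinite {x : Cant} (h : (ksupp x).Infinite) (n : ℕ) : hasn n x := by
  obtain ⟨T, hTs, hTc⟩ := h.exists_subset_card_eq n
  rcases T.eq_empty_or_nonempty with rfl | hne
  · simp at hTc
    subst hTc
    exact hasn_zero x
  · obtain ⟨M, hM⟩ := T.exists_max_image id hne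
    refine ⟨M, ?_⟩
    rw [← hTc, cnt]
    apply Finset.card_le_card
    intro a ha
    simp only [Finset.mem_filter, Finset.mem_range]
    have h1 := hM.2 a ha
    have h2 : a ∈ ksupp x := hTs ha
    rw [mem_ksupp] at h2
    exact ⟨by simpa using Nat.lt_succ_of_le h1, h2⟩

lemma finite_of_not_hasn {n : ℕ} {x : Cant} (h : ¬ hasn n x) : (ksupp x).Finite := by
  by_contra hi
  exact h (hasn_of_infinite hi n)

lemma hasn_ncard {x : Cant} (hf : (ksupp x).Finite) : hasn ((ksupp x).ncard) x := by
  obtain ⟨M, hM⟩ := hf.bddAbove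
  exact ⟨M, le_of_eq (cnt_eq_card hf (fun i hi => hM hi)).symm⟩

lemma ncard_lt_of_not_hasn {n : ℕ} {x : Cant} (h : ¬ hasn n x) : (ksupp x).ncard < n := by
  by_contra hge
  exact h (hasn_mono (by omega) (hasn_ncard (finite_of_not_hasn h)))

lemma trunc_eq_self_of_ncard_le {n : ℕ} {x : Cant} (hf : (ksupp x).Finite)
    (h : (ksupp x).ncard ≤ n) : trunc n x = x :=
  trunc_eq_self (fun m => le_trans (cnt_le_card hf m) h)

/-- the position of the n-th support element (n ≥ 1), as least m with n ≤ cnt x m -/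
noncomputable def nthel {n : ℕ} {x : Cant} (h : hasn n x) : ℕ := Nat.find h

lemma nthel_spec {n : ℕ} {x : Cant} (h : hasn n x) (hn : 1 ≤ n) :
    X x (nthel h) = true ∧ cnt x (nthel h) = n ∧ ∀ i < nthel h, cnt x i < n := by
  have hfind : n ≤ cnt x (Nat.find h) := Nat.find_spec h
  have hmin : ∀ i < Nat.find h, cnt x i < n := by
    intro i hi
    have := Nat.find_min h hi
    omega
  have hpos : 0 < Nat.find h := by
    by_contra h0
    have : Nat.find h = 0 := by omega
    rw [this, cnt_zero] at hfind
    omega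
  obtain ⟨m, hm⟩ : ∃ m, Nat.find h = m + 1 := ⟨Nat.find h - 1, by omega⟩
  have hprev : cnt x m < n := hmin m (by omega)
  have hstep := cnt_succ x m
  rw [← hm] at hstep
  by_cases hX : X x (Nat.find h) = true
  · rw [if_pos hX] at hstep
    exact ⟨hX, by unfold nthel; omega, hmin⟩
  · rw [if_neg hX] at hstep
    omega

lemma supp_trunc_finite (n : ℕ) (x : Cant) : (ksupp (trunc n x)).Finite := by
  by_cases h : hasn (n+1) x
  · apply Set.Finite.subset (Set.finite_Iic (nthel h))
    intro i hi
    rw [mem_ksupp, mem_supp_trunc] at hi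
    obtain ⟨hX, hc, hmin⟩ := nthel_spec h (by omega)
    simp only [Set.mem_Iic]
    by_contra hgt
    have := cnt_lt_of (show nthel h < i by omega) hi.1
    omega
  · rw [trunc_eq_self_of_not_hasn h]
    exact finite_of_not_hasn (fun hh => h hh)

lemma ncard_supp_trunc {n : ℕ} {x : Cant} (h : hasn n x) :
    (ksupp (trunc n x)).ncard = n := by
  have hbij : Set.BijOn (cnt x) (ksupp (trunc n x)) (Set.Icc 1 n) := by
    refine ⟨?_, ?_, ?_⟩
    · intro i hi
      rw [mem_ksupp, mem_supp_trunc] at hi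
      exact ⟨one_le_cnt hi.1, hi.2⟩
    · intro i hi j hj hij
      rw [mem_ksupp, mem_supp_trunc] at hi hj
      by_contra hne
      rcases lt_or_gt_of_ne hne with hlt | hlt
      · exact absurd hij (ne_of_lt (cnt_lt_of hlt hj.1))
      · exact absurd hij.symm (ne_of_lt (cnt_lt_of hlt hi.1))
    · rintro k ⟨hk1, hkn⟩
      obtain ⟨hX, hc, _⟩ := nthel_spec (hasn_mono hkn h) hk1
      exact ⟨nthel (hasn_mono hkn h), mem_ksupp.mpr (mem_supp_trunc.mpr ⟨hX, by omega⟩), hc⟩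
  rw [← Set.ncard_image_of_injOn hbij.injOn, hbij.image_eq,
    ← Finset.coe_Icc, Set.ncard_coe_finset, Nat.card_Icc]
  omega

lemma trunc_zero_eq (x : Cant) : trunc 0 x = (fun _ => false) := by
  apply cant_ext
  intro m
  have hbot : X (fun _ => false : Cant) m = false := by
    unfold X; split <;> rfl
  rw [X_trunc, hbot]
  by_cases hX : X x m = true
  · rw [hX]
    have := one_le_cnt hX
    simp only [Bool.true_and, decide_eq_false_iff_not]
    omega
  · rw [Bool.not_eq_true] at hX
    rw [hX, Bool.false_and]

lemma Nd_le {x : Cant} (hf : (ksupp x).Finite) {i : ℕ} (hi : i ∈ ksupp x) : i ≤ Nd x :=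
  le_csSup hf.bddAbove hi

lemma Nd_mem {x : Cant} (hf : (ksupp x).Finite) (hne : (ksupp x).Nonempty) :
    Nd x ∈ ksupp x := Nat.sSup_mem hne hf.bddAbove

lemma ksupp_empty_bot : ksupp (fun _ => false : Cant) = ∅ := by
  ext n
  rw [mem_ksupp]
  simp only [Set.mem_empty_iff_false, iff_false]
  intro h
  have := pos_of_X h
  rw [X, dif_pos this] at h
  exact absurd h (by simp)

lemma Nd_trunc {n : ℕ} {x : Cant} (h : hasn n x) (hn : 1 ≤ n) :
    Nd (trunc n x) = nthel h := by
  obtain ⟨hX, hc, hmin⟩ := nthel_spec h hn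
  have hub : ∀ i ∈ ksupp (trunc n x), i ≤ nthel h := by
    intro i hi
    rw [mem_ksupp, mem_supp_trunc] at hi
    by_contra hgt
    have := cnt_lt_of (show nthel h < i by omega) hi.1
    omega
  have hmem : nthel h ∈ ksupp (trunc n x) :=
    mem_ksupp.mpr (mem_supp_trunc.mpr ⟨hX, by omega⟩)
  exact le_antisymm (csSup_le ⟨_, hmem⟩ hub) (le_csSup (supp_trunc_finite n x).bddAbove hmem)

lemma dch_trunc {n : ℕ} {x : Cant} (h : hasn (n+1) x) :
    trunc (n+1) x ∈ Dch (trunc n x) ∧ trunc (n+1) x ≠ trunc n x := by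
  have hn : hasn n x := hasn_mono (by omega) h
  have hcard : (ksupp (trunc (n+1) x)).ncard = (ksupp (trunc n x)).ncard + 1 := by
    rw [ncard_supp_trunc h, ncard_supp_trunc hn]
  refine ⟨⟨supp_trunc_finite _ x, hcard, ?_⟩, ?_⟩
  · intro i hi
    rcases Nat.eq_zero_or_pos n with rfl | hpos
    · rw [trunc_zero_eq] at hi
      rw [Nd, ksupp_empty_bot] at hi
      have : sSup (∅ : Set ℕ) = 0 := csSup_empty
      rw [this] at hi
      exact absurd hi (by have := i.pos; omega)
    · rw [Nd_trunc hn hpos] at hi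
      obtain ⟨hX, hc, _⟩ := nthel_spec hn hpos
      have hle : cnt x (i : ℕ) ≤ n := by
        have := cnt_mono x hi
        omega
      show (x i && decide (cnt x (i:ℕ) ≤ n+1)) = (x i && decide (cnt x (i:ℕ) ≤ n))
      rw [decide_eq_true (show cnt x (i:ℕ) ≤ n + 1 by omega), decide_eq_true hle]
  · intro heq
    rw [heq] at hcard
    omega

/-- add a single support element -/
def bump (d : Cant) (m : ℕ) : Cant := fun i => d i || decide ((i : ℕ) = m)

lemma ksupp_bump {d : Cant} {m : ℕ} (hm : 1 ≤ m) :
    ksupp (bump d m) = insert m (ksupp d) := by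
  ext n
  rw [mem_ksupp, Set.mem_insert_iff, mem_ksupp]
  constructor
  · intro h
    have hpos := pos_of_X h
    rw [X, dif_pos hpos] at h
    simp only [bump, Bool.or_eq_true, decide_eq_true_eq] at h
    rcases h with h | h
    · right; rw [X, dif_pos hpos]; exact h
    · left; exact h
  · intro h
    rcases h with rfl | h
    · have hpos : 0 < n := hm
      rw [X, dif_pos hpos]
      simp [bump]
    · have hpos := pos_of_X h
      rw [X, dif_pos hpos] at h ⊢
      simp [bump, h]

lemma bump_mem_dch {d : Cant} (hf : (ksupp d).Finite) {m : ℕ} (hm : Nd d < m) (hm1 : 1 ≤ m) :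
    bump d m ∈ Dch d ∧ Nd (bump d m) = m := by
  have hnot : m ∉ ksupp d := fun h => absurd (Nd_le hf h) (by omega)
  have hsupp := ksupp_bump (d := d) hm1
  have hfin : (ksupp (bump d m)).Finite := by rw [hsupp]; exact hf.insert m
  constructor
  · refine ⟨hfin, ?_, ?_⟩
    · rw [hsupp, Set.ncard_insert_of_notMem hnot hf]
    · intro i hi
      show (d i || decide ((i:ℕ) = m)) = d i
      rw [decide_eq_false (show ¬ ((i:ℕ) = m) by omega), Bool.or_false]
  · have hub : ∀ i ∈ ksupp (bump d m), i ≤ m := by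
      intro i hi
      rw [hsupp] at hi
      rcases hi with rfl | hi
      · exact le_refl _
      · exact le_of_lt (lt_of_le_of_lt (Nd_le hf hi) hm)
    have hmem : m ∈ ksupp (bump d m) := by rw [hsupp]; exact Set.mem_insert m _
    exact le_antisymm (csSup_le ⟨_, hmem⟩ hub) (le_csSup hfin.bddAbove hmem)

end CP
namespace CP
open Metric

variable {σ : Cant → Plane} {ℓ : Cant → ℕ}

noncomputable def rad (ℓ : Cant → ℕ) (d : Cant) : ℝ := (2:ℝ) ^ (-(ℓ d : ℤ))

lemma rad_pos (ℓ : Cant → ℕ) (d : Cant) : 0 < rad ℓ d := zpow_pos two_pos _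

lemma Wb_eq (σ : Cant → Plane) (ℓ : Cant → ℕ) (d : Cant) :
    Wb σ ℓ d = ball (σ d) (rad ℓ d) := rfl

lemma closure_Wb (σ : Cant → Plane) (ℓ : Cant → ℕ) (d : Cant) :
    closure (Wb σ ℓ d) = closedBall (σ d) (rad ℓ d) :=
  closure_ball _ (ne_of_gt (rad_pos ℓ d))

lemma Ub_eq (σ : Cant → Plane) (ℓ : Cant → ℕ) (d : Cant) :
    Ub σ ℓ d = ball (σ d) (rad ℓ d / 2) := by
  unfold Ub rad
  rw [show -(ℓ d : ℤ) - 1 = -(ℓ d : ℤ) - (1:ℤ) from rfl, zpow_sub₀ (two_ne_zero), zpow_one]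

lemma Ub_sub_Wb (σ : Cant → Plane) (ℓ : Cant → ℕ) (d : Cant) :
    Ub σ ℓ d ⊆ Wb σ ℓ d := by
  rw [Ub_eq, Wb_eq]
  exact ball_subset_ball (by linarith [rad_pos ℓ d])

lemma sigma_mem_Wb (σ : Cant → Plane) (ℓ : Cant → ℕ) (d : Cant) : σ d ∈ Wb σ ℓ d :=
  mem_ball_self (rad_pos ℓ d)

/-- All metric consequences of condition (2) for a child `e` of `d`. -/
lemma child_props (hc : CantorConds σ ℓ) {d e : Cant}
    (hd : (ksupp d).Finite) (he : e ∈ Dch d) :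
    dist (σ e) (σ d) < rad ℓ d / 2 ∧ rad ℓ e < dist (σ e) (σ d) ∧
    rad ℓ e < rad ℓ d / 2 ∧ closure (Wb σ ℓ e) ⊆ Wb σ ℓ d ∧
    σ d ∉ closure (Wb σ ℓ e) := by
  have h2 := hc.2.1 d hd e he
  have hσe : σ e ∈ closure (Wb σ ℓ e) := by
    rw [closure_Wb]
    exact mem_closedBall_self (rad_pos ℓ e).le
  have h1 := h2 hσe
  rw [Ub_eq] at h1
  have hdist : dist (σ e) (σ d) < rad ℓ d / 2 := mem_ball.mp h1.1
  have hnd : σ d ∉ closure (Wb σ ℓ e) := by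
    intro hmem
    exact (h2 hmem).2 rfl
  have hrd : rad ℓ e < dist (σ e) (σ d) := by
    rw [closure_Wb, mem_closedBall, dist_comm] at hnd
    linarith [not_le.mp hnd]
  have hrr : rad ℓ e < rad ℓ d / 2 := by
    set u : Plane := EuclideanSpace.single (0 : Fin 2) (1:ℝ) with hu_def
    have hu : ‖u‖ = 1 := by rw [hu_def, EuclideanSpace.norm_single]; norm_num
    set v : Plane := rad ℓ e • u with hv_def
    have hv : ‖v‖ = rad ℓ e := by
      rw [hv_def, norm_smul, hu, mul_one, Real.norm_eq_abs, abs_of_pos (rad_pos ℓ e)]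
    have hp1 : σ e + v ∈ closure (Wb σ ℓ e) := by
      rw [closure_Wb, mem_closedBall, dist_eq_norm]
      simp only [add_sub_cancel_left]
      rw [hv]
    have hp2 : σ e - v ∈ closure (Wb σ ℓ e) := by
      rw [closure_Wb, mem_closedBall, dist_eq_norm]
      simp only [sub_sub_cancel_left, norm_neg]
      rw [hv]
    have h1' := h2 hp1
    have h2' := h2 hp2
    rw [Ub_eq] at h1' h2'
    have d1 : dist (σ e + v) (σ d) < rad ℓ d / 2 := mem_ball.mp h1'.1
    have d2 : dist (σ e - v) (σ d) < rad ℓ d / 2 := mem_ball.mp h2'.1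
    have hdd : dist (σ e + v) (σ e - v) = 2 * rad ℓ e := by
      rw [dist_eq_norm]
      have : (σ e + v) - (σ e - v) = (2:ℝ) • v := by
        rw [two_smul]; abel
      rw [this, norm_smul, hv, Real.norm_eq_abs]
      norm_num
    have := dist_triangle (σ e + v) (σ d) (σ e - v)
    rw [hdd, dist_comm (σ d) (σ e - v)] at this
    linarith
  refine ⟨hdist, hrd, hrr, ?_, hnd⟩
  exact fun z hz => Ub_sub_Wb σ ℓ d ((fun w hw => (h2 hw).1) z hz)

lemma rad_trunc (hc : CantorConds σ ℓ) :
    ∀ n (x : Cant), hasn n x → rad ℓ (trunc n x) ≤ (2:ℝ) ^ (-(n:ℤ)) := by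
  intro n
  induction n with
  | zero =>
    intro x _
    rw [trunc_zero_eq]
    unfold rad
    rw [Nat.cast_zero, neg_zero, zpow_zero]
    calc (2:ℝ) ^ (-(ℓ (fun _ => false : Cant) : ℤ)) ≤ (2:ℝ) ^ (0:ℤ) :=
        zpow_le_zpow_right₀ one_le_two (by omega)
    _ = 1 := zpow_zero 2
  | succ n ih =>
    intro x h
    have hn : hasn n x := hasn_mono (by omega) h
    have hch := (dch_trunc h).1
    have hp := child_props hc (supp_trunc_finite n x) hch
    have := ih x hn
    have h2 : ((2:ℝ))^(-(((n:ℕ)+1:ℕ)):ℤ) = (2:ℝ)^(-(n:ℤ)) / 2 := by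
      push_cast
      rw [show -((n:ℤ)+1) = -(n:ℤ) - 1 from by ring, zpow_sub₀ (two_ne_zero), zpow_one]
    rw [h2]
    linarith [hp.2.2.1]

lemma chain_clW (hc : CantorConds σ ℓ) (x : Cant) :
    ∀ {n m : ℕ}, n ≤ m → closure (Wb σ ℓ (trunc m x)) ⊆ closure (Wb σ ℓ (trunc n x)) := by
  intro n m hnm
  induction m with
  | zero =>
    have : n = 0 := by omega
    subst this
    exact subset_rfl
  | succ m ih =>
    rcases Nat.eq_or_lt_of_le hnm with heq | hlt
    · rw [heq]
    · have hsub : closure (Wb σ ℓ (trunc (m+1) x)) ⊆ closure (Wb σ ℓ (trunc m x)) := by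
        by_cases h : hasn (m+1) x
        · have hp := child_props hc (supp_trunc_finite m x) (dch_trunc h).1
          exact hp.2.2.2.1.trans subset_closure
        · rw [trunc_eq_self_of_not_hasn h,
            trunc_eq_self_of_not_hasn (fun hh => h (hasn_mono (by omega) hh))]
      exact hsub.trans (ih (by omega))

noncomputable def hraw (σ : Cant → Plane) (x : Cant) : Plane :=
  Filter.limUnder Filter.atTop (fun n => σ (trunc n x))

lemma cauchy_seq (hc : CantorConds σ ℓ) (x : Cant) :
    CauchySeq (fun n => σ (trunc n x)) := by
  apply cauchySeq_of_le_geometric (1/2 : ℝ) 1 (by norm_num)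
  intro n
  have hb : (1:ℝ) * (1/2)^n = (2:ℝ)^(-(n:ℤ)) := by
    rw [one_mul, one_div, inv_pow, ← zpow_natCast, ← zpow_neg]
  rw [hb]
  by_cases h : hasn (n+1) x
  · have hp := child_props hc (supp_trunc_finite n x) (dch_trunc h).1
    have hr := rad_trunc hc n x (hasn_mono (by omega) h)
    rw [dist_comm]
    have h1 : dist (σ (trunc (n+1) x)) (σ (trunc n x)) < rad ℓ (trunc n x) / 2 := hp.1
    have h0 := rad_pos ℓ (trunc n x)
    linarith
  · rw [trunc_eq_self_of_not_hasn h,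
      trunc_eq_self_of_not_hasn (fun hh => h (hasn_mono (by omega) hh)), dist_self]
    positivity

lemma tendsto_hraw (hc : CantorConds σ ℓ) (x : Cant) :
    Filter.Tendsto (fun n => σ (trunc n x)) Filter.atTop (nhds (hraw σ x)) :=
  (cauchy_seq hc x).tendsto_limUnder

lemma hraw_mem_clW (hc : CantorConds σ ℓ) (x : Cant) (n : ℕ) :
    hraw σ x ∈ closure (Wb σ ℓ (trunc n x)) := by
  apply isClosed_closure.mem_of_tendsto (tendsto_hraw hc x)
  filter_upwards [Filter.eventually_ge_atTop n] with m hm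
  exact chain_clW hc x hm (subset_closure (sigma_mem_Wb σ ℓ (trunc m x)))

lemma hraw_eq_sigma (hc : CantorConds σ ℓ) {x : Cant} (hf : (ksupp x).Finite) :
    hraw σ x = σ x := by
  have hev : ∀ m ≥ (ksupp x).ncard, σ (trunc m x) = σ x := by
    intro m hm
    rw [trunc_eq_self_of_ncard_le hf hm]
  apply tendsto_nhds_unique (tendsto_hraw hc x)
  apply Filter.Tendsto.congr' _ tendsto_const_nhds
  filter_upwards [Filter.eventually_ge_atTop ((ksupp x).ncard)] with m hm
  exact (hev m hm).symm

lemma hraw_mem_W (hc : CantorConds σ ℓ) (x : Cant) (n : ℕ) :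
    hraw σ x ∈ Wb σ ℓ (trunc n x) := by
  by_cases h : hasn (n+1) x
  · have hp := child_props hc (supp_trunc_finite n x) (dch_trunc h).1
    exact hp.2.2.2.1 (hraw_mem_clW hc x (n+1))
  · have hx : trunc n x = x := trunc_eq_self_of_not_hasn h
    have hf : (ksupp x).Finite := finite_of_not_hasn h
    rw [hx, hraw_eq_sigma hc hf]
    exact sigma_mem_Wb σ ℓ x

end CP
namespace CP
open Metric Filter

variable {σ : Cant → Plane} {ℓ : Cant → ℕ}

lemma two_zpow_neg_eq (m : ℕ) : (2:ℝ)^(-(m:ℤ)) = (1/2)^m := by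
  rw [zpow_neg, zpow_natCast, one_div, inv_pow]

lemma exists_small_zpow {ε : ℝ} (hε : 0 < ε) : ∃ n : ℕ, 1 ≤ n ∧ (2:ℝ)^(-(n:ℤ)) < ε := by
  obtain ⟨n₀, hn₀⟩ := exists_pow_lt_of_lt_one hε (by norm_num : (1:ℝ)/2 < 1)
  refine ⟨max n₀ 1, le_max_right _ _, ?_⟩
  calc (2:ℝ)^(-((max n₀ 1 : ℕ):ℤ)) ≤ (2:ℝ)^(-(n₀:ℤ)) := by
        apply zpow_le_zpow_right₀ one_le_two
        have := le_max_left n₀ 1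
        omega
  _ = (1/2)^n₀ := two_zpow_neg_eq n₀
  _ < ε := hn₀

lemma sigma_mem_level (hc : CantorConds σ ℓ) :
    ∀ (j : ℕ) (x : Cant), (ksupp x).Finite →
    σ x ∈ closure (⋃ d ∈ {d : Cant | (ksupp d).Finite ∧
      (ksupp d).ncard = (ksupp x).ncard + j}, Wb σ ℓ d) := by
  intro j
  induction j with
  | zero =>
    intro x hf
    apply subset_closure
    exact Set.mem_biUnion (show x ∈ _ from ⟨hf, by omega⟩) (sigma_mem_Wb σ ℓ x)
  | succ j ih =>
    intro x hf
    have key : σ x ∈ closure (closure (⋃ d ∈ {d : Cant | (ksupp d).Finite ∧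
        (ksupp d).ncard = (ksupp x).ncard + (j+1)}, Wb σ ℓ d)) := by
      apply Metric.mem_closure_iff.mpr
      intro ε hε
      obtain ⟨M, hM⟩ := hc.1 x hf ε hε
      have hmlt : Nd x < max M (Nd x) + 1 := by
        have := le_max_right M (Nd x)
        omega
      set m := max M (Nd x) + 1 with hm_def
      obtain ⟨hdch, hNd⟩ := bump_mem_dch hf hmlt (by omega)
      refine ⟨σ (bump x m), ?_, ?_⟩
      · have hfin : (ksupp (bump x m)).Finite := hdch.1
        have := ih (bump x m) hfin
        rw [hdch.2.1] at this
        have harith : (ksupp x).ncard + 1 + j = (ksupp x).ncard + (j+1) := by omega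
        rw [harith] at this
        exact this
      · rw [dist_comm]
        apply hM (bump x m) hdch
        rw [hNd, hm_def]
        have := le_max_left M (Nd x)
        omega
    rwa [closure_closure] at key

lemma hraw_mem_K (hc : CantorConds σ ℓ) (x : Cant) : hraw σ x ∈ Kset σ ℓ := by
  rw [Kset]
  apply Set.mem_iInter.mpr
  intro n
  by_cases h : hasn n x
  · have hmem : trunc n x ∈ {d : Cant | (ksupp d).Finite ∧ (ksupp d).ncard = n} :=
      ⟨supp_trunc_finite n x, ncard_supp_trunc h⟩
    exact closure_mono (Set.subset_biUnion_of_mem hmem) (hraw_mem_clW hc x n)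
  · have hf := finite_of_not_hasn h
    have hlt := ncard_lt_of_not_hasn h
    obtain ⟨j, hj⟩ : ∃ j, n = (ksupp x).ncard + j := ⟨n - (ksupp x).ncard, by omega⟩
    rw [hraw_eq_sigma hc hf, hj]
    exact sigma_mem_level hc j x hf

lemma rad_of_level (hc : CantorConds σ ℓ) {n : ℕ} {d : Cant}
    (hd : (ksupp d).Finite) (hn : (ksupp d).ncard = n) : rad ℓ d ≤ (2:ℝ)^(-(n:ℤ)) := by
  have htr : trunc n d = d := trunc_eq_self_of_ncard_le hd (le_of_eq hn)
  have := rad_trunc hc n d (hn ▸ hasn_ncard hd)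
  rwa [htr] at this

lemma K_sub_range (hc : CantorConds σ ℓ) (hcont : Continuous (hraw σ)) :
    Kset σ ℓ ⊆ Set.range (hraw σ) := by
  intro y hy
  have hclosed : IsClosed (Set.range (hraw σ)) := (isCompact_range hcont).isClosed
  rw [← hclosed.closure_eq]
  apply Metric.mem_closure_iff.mpr
  intro ε hε
  obtain ⟨n, _, hn⟩ := exists_small_zpow (show (0:ℝ) < ε/2 by linarith)
  have hy' := Set.mem_iInter.mp hy n
  obtain ⟨w, hw, hdist⟩ := Metric.mem_closure_iff.mp hy' (ε/2) (by linarith)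
  obtain ⟨d, hd, hwd⟩ := Set.mem_iUnion₂.mp hw
  have hrad : rad ℓ d ≤ (2:ℝ)^(-(n:ℤ)) := rad_of_level hc hd.1 hd.2
  have hwdist : dist w (σ d) < rad ℓ d := mem_ball.mp hwd
  refine ⟨hraw σ d, Set.mem_range_self d, ?_⟩
  rw [hraw_eq_sigma hc hd.1]
  calc dist y (σ d) ≤ dist y w + dist w (σ d) := dist_triangle _ _ _
  _ < ε/2 + (2:ℝ)^(-(n:ℤ)) := by linarith
  _ < ε/2 + ε/2 := by linarith
  _ = ε := by ring

lemma nbhd_agree (x : Cant) (M : ℕ) :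
    {y : Cant | ∀ j ≤ M, X y j = X x j} ∈ nhds x := by
  have heq : {y : Cant | ∀ j ≤ M, X y j = X x j}
      = ⋂ i ∈ {i : ℕ+ | (i:ℕ) ≤ M}, {y : Cant | y i = x i} := by
    ext y
    simp only [Set.mem_setOf_eq, Set.mem_iInter]
    constructor
    · intro h i hi
      have := h (i : ℕ) hi
      rwa [X_coe, X_coe] at this
    · intro h j hj
      by_cases hj0 : 0 < j
      · have := h ⟨j, hj0⟩ hj
        rw [X, X, dif_pos hj0, dif_pos hj0]
        exact this
      · have : j = 0 := by omega
        subst this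
        rw [X_zero, X_zero]
  rw [heq]
  apply IsOpen.mem_nhds
  · apply Set.Finite.isOpen_biInter
    · have : {i : ℕ+ | (i:ℕ) ≤ M} = ((↑) : ℕ+ → ℕ) ⁻¹' (Set.Iic M) := rfl
      rw [this]
      exact Set.Finite.preimage (Set.injOn_of_injective (fun a b h => PNat.coe_injective h))
        (Set.finite_Iic M)
    · intro i _
      have : {y : Cant | y i = x i} = (fun y : Cant => y i) ⁻¹' {x i} := rfl
      rw [this]
      exact (isOpen_discrete _).preimage (continuous_apply i)
  · exact Set.mem_iInter₂.mpr (fun i hi => rfl)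

lemma trunc_eq_of_agree {x y : Cant} {n M : ℕ}
    (hagree : ∀ j ≤ M, X y j = X x j) (hcnt : cnt x M = n) : trunc n y = trunc n x := by
  have hcy : cnt y M = n := by rw [cnt_agree hagree M le_rfl]; exact hcnt
  apply cant_ext
  intro j
  by_cases hj : j ≤ M
  · rw [X_trunc, X_trunc, hagree j hj, cnt_agree hagree j hj]
  · have hjM : M < j := by omega
    have hx : X (trunc n x) j = false := by
      rw [X_trunc]
      by_cases hX : X x j = true
      · have := cnt_lt_of hjM hX
        rw [hX, Bool.true_and, decide_eq_false_iff_not]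
        omega
      · rw [Bool.not_eq_true] at hX
        rw [hX, Bool.false_and]
    have hy' : X (trunc n y) j = false := by
      rw [X_trunc]
      by_cases hX : X y j = true
      · have := cnt_lt_of hjM hX
        rw [hX, Bool.true_and, decide_eq_false_iff_not]
        omega
      · rw [Bool.not_eq_true] at hX
        rw [hX, Bool.false_and]
    rw [hx, hy']

lemma hraw_continuous (hc : CantorConds σ ℓ) : Continuous (hraw σ) := by
  rw [continuous_iff_continuousAt]
  intro x
  rw [ContinuousAt, Metric.tendsto_nhds]
  intro ε hε
  by_cases hfin : (ksupp x).Finite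
  · -- finite support case
    set k := (ksupp x).ncard with hk_def
    obtain ⟨M₁, hM₁⟩ := hc.1 x hfin (ε/2) (by linarith)
    set M := max M₁ (Nd x) with hM_def
    filter_upwards [nbhd_agree x M] with y hy
    have hcntM : cnt x M = k := cnt_eq_card hfin
      (fun i hi => le_trans (Nd_le hfin hi) (le_max_right _ _))
    have htr : trunc k y = x := by
      rw [trunc_eq_of_agree hy hcntM, trunc_eq_self_of_ncard_le hfin le_rfl]
    by_cases hy1 : hasn (k+1) y
    · have hdch := (dch_trunc hy1).1
      rw [htr] at hdch
      have hp := child_props hc hfin hdch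
      have hNd : M < Nd (trunc (k+1) y) := by
        rw [Nd_trunc hy1 (by omega)]
        obtain ⟨hX, hcn, hmin⟩ := nthel_spec hy1 (by omega)
        by_contra hle
        have h1 : cnt y M = k := by rw [cnt_agree hy M le_rfl]; exact hcntM
        have := cnt_mono y (show nthel hy1 ≤ M by omega)
        omega
      have hdd : dist (σ (trunc (k+1) y)) (σ x) < ε/2 := by
        apply hM₁ _ hdch
        have := le_max_left M₁ (Nd x)
        omega
      have hry : hraw σ y ∈ closure (Wb σ ℓ (trunc (k+1) y)) := hraw_mem_clW hc y (k+1)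
      rw [closure_Wb, mem_closedBall] at hry
      rw [hraw_eq_sigma hc hfin]
      calc dist (hraw σ y) (σ x)
          ≤ dist (hraw σ y) (σ (trunc (k+1) y)) + dist (σ (trunc (k+1) y)) (σ x) :=
        dist_triangle _ _ _
      _ < rad ℓ (trunc (k+1) y) + ε/2 := by linarith
      _ < ε/2 + ε/2 := by
          have h2 := hp.2.1
          linarith
      _ = ε := by ring
    · have : y = x := by
        rw [← trunc_eq_self_of_not_hasn hy1, htr]
      rw [this, dist_self]
      exact hε
  · -- infinite support case
    have hinf : ∀ n, hasn n x := hasn_of_infinite hfin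
    obtain ⟨n, hn1, hn⟩ := exists_small_zpow (show (0:ℝ) < ε/2 by linarith)
    set M := nthel (hinf n) with hM_def
    filter_upwards [nbhd_agree x M] with y hy
    have htr : trunc n y = trunc n x :=
      trunc_eq_of_agree hy (nthel_spec (hinf n) hn1).2.1
    have hrx : hraw σ x ∈ closure (Wb σ ℓ (trunc n x)) := hraw_mem_clW hc x n
    have hry : hraw σ y ∈ closure (Wb σ ℓ (trunc n x)) := by
      rw [← htr]
      exact hraw_mem_clW hc y n
    rw [closure_Wb, mem_closedBall] at hrx hry
    have hrad := rad_trunc hc n x (hinf n)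
    have h1 : dist (σ (trunc n x)) (hraw σ x) ≤ rad ℓ (trunc n x) := by
      rw [dist_comm]
      exact hrx
    calc dist (hraw σ y) (hraw σ x)
        ≤ dist (hraw σ y) (σ (trunc n x)) + dist (σ (trunc n x)) (hraw σ x) :=
          dist_triangle _ _ _
    _ ≤ rad ℓ (trunc n x) + rad ℓ (trunc n x) := by linarith
    _ < ε := by linarith

end CP
namespace CP
open Metric Filter

variable {σ : Cant → Plane} {ℓ : Cant → ℕ}

lemma X_trunc_eq_of_le {x : Cant} {m n : ℕ} (h : cnt x m ≤ n) :
    X (trunc n x) m = X x m := by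
  rw [X_trunc, decide_eq_true h, Bool.and_true]

lemma hraw_ne_of_short (hc : CantorConds σ ℓ) {x y : Cant} {n : ℕ}
    (hmin : ∀ m < n+1, trunc m x = trunc m y) (hne : trunc (n+1) x ≠ trunc (n+1) y)
    (hx : ¬ hasn (n+1) x) : hraw σ x ≠ hraw σ y := by
  have htx : trunc n x = x := trunc_eq_self_of_not_hasn hx
  have htx1 : trunc (n+1) x = x :=
    trunc_eq_self_of_not_hasn (fun hh => hx (hasn_mono (by omega) hh))
  have hy1 : hasn (n+1) y := by
    by_contra hy
    have hty : trunc n y = y := trunc_eq_self_of_not_hasn hy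
    have hty1 : trunc (n+1) y = y :=
      trunc_eq_self_of_not_hasn (fun hh => hy (hasn_mono (by omega) hh))
    apply hne
    rw [htx1, hty1, ← htx, ← hty]
    exact hmin n (by omega)
  have hf : (ksupp x).Finite := finite_of_not_hasn hx
  have hj : (ksupp x).ncard ≤ n := by
    have := ncard_lt_of_not_hasn hx
    omega
  set j := (ksupp x).ncard with hj_def
  have htjx : trunc j x = x := trunc_eq_self_of_ncard_le hf le_rfl
  have htjy : trunc j y = x := by rw [← hmin j (by omega), htjx]
  have hyj1 : hasn (j+1) y := hasn_mono (by omega) hy1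
  have hdch := (dch_trunc hyj1).1
  rw [htjy] at hdch
  have hp := hc.2.1 x hf _ hdch
  have hry : hraw σ y ∈ closure (Wb σ ℓ (trunc (j+1) y)) := hraw_mem_clW hc y (j+1)
  have hne2 : hraw σ y ≠ σ x := fun heq => (hp hry).2 (by rw [heq]; rfl)
  rw [hraw_eq_sigma hc hf]
  exact fun h => hne2 h.symm

lemma hraw_injective (hc : CantorConds σ ℓ) : Function.Injective (hraw σ) := by
  classical
  intro x y hxy
  by_contra hne
  have hex : ∃ n, trunc n x ≠ trunc n y := by
    by_contra hall
    push_neg at hall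
    apply hne
    apply cant_ext
    intro i
    set n := max (cnt x i) (cnt y i) with hn_def
    have h1 : X x i = X (trunc n x) i := (X_trunc_eq_of_le (le_max_left _ _)).symm
    have h2 : X (trunc n y) i = X y i := X_trunc_eq_of_le (le_max_right _ _)
    rw [h1, hall n, h2]
  have hspec : trunc (Nat.find hex) x ≠ trunc (Nat.find hex) y := Nat.find_spec hex
  have hmin : ∀ m < Nat.find hex, trunc m x = trunc m y := by
    intro m hm
    have := Nat.find_min hex hm
    exact not_not.mp this
  have hn1 : 1 ≤ Nat.find hex := by
    rcases Nat.eq_zero_or_pos (Nat.find hex) with h0 | h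
    · rw [h0] at hspec
      rw [trunc_zero_eq, trunc_zero_eq] at hspec
      exact absurd rfl hspec
    · omega
  obtain ⟨m, hm⟩ : ∃ m, Nat.find hex = m + 1 := ⟨Nat.find hex - 1, by omega⟩
  rw [hm] at hspec hmin
  by_cases hx : hasn (m+1) x
  · by_cases hy : hasn (m+1) y
    · have hdisj := hc.2.2 (m+1) (trunc (m+1) x) (trunc (m+1) y)
        (supp_trunc_finite _ x) (ncard_supp_trunc hx)
        (supp_trunc_finite _ y) (ncard_supp_trunc hy) hspec
      have h1 := hraw_mem_clW hc x (m+1)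
      have h2 := hraw_mem_clW hc y (m+1)
      rw [hxy] at h1
      exact Set.disjoint_left.mp hdisj h1 h2
    · exact hraw_ne_of_short hc (fun k hk => (hmin k hk).symm) (Ne.symm hspec) hy hxy.symm
  · exact hraw_ne_of_short hc hmin hspec hx hxy

lemma mem_Vd_iff {d : Cant} (hf : (ksupp d).Finite) (x : Cant) :
    x ∈ Vd d ↔ trunc ((ksupp d).ncard) x = d := by
  set k := (ksupp d).ncard with hk_def
  have htkd : trunc k d = d := trunc_eq_self_of_ncard_le hf le_rfl
  constructor
  · intro hx
    have hagree : ∀ j ≤ Nd d, X x j = X d j := by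
      intro j hj
      by_cases hj0 : 0 < j
      · have := hx ⟨j, hj0⟩ hj
        rw [X, X, dif_pos hj0, dif_pos hj0]
        exact this
      · have : j = 0 := by omega
        subst this
        rw [X_zero, X_zero]
    have hcnt : cnt d (Nd d) = k := cnt_eq_card hf (fun i hi => Nd_le hf hi)
    calc trunc k x = trunc k d := trunc_eq_of_agree hagree hcnt
    _ = d := htkd
  · intro h
    intro i hi
    have hxi : X (trunc k x) (i:ℕ) = X d (i:ℕ) := by rw [h]
    rw [X_trunc] at hxi
    by_cases hcase : x i = true
    · have hXxi : X x (i:ℕ) = true := by rw [X_coe]; exact hcase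
      have hk1 : 1 ≤ k := by
        by_contra hk0
        have hk0' : k = 0 := by omega
        have hemp : ksupp d = ∅ := by
          rw [← Set.ncard_eq_zero hf, ← hk_def, hk0']
        have : Nd d = 0 := by
          rw [Nd, hemp]
          exact csSup_empty
        rw [this] at hi
        have := i.pos
        omega
      have hNdmem : Nd d ∈ ksupp d := Nd_mem hf (by
        rw [Set.nonempty_iff_ne_empty]
        intro hemp
        rw [hemp, Set.ncard_empty] at hk_def
        omega)
      have hNdx : Nd d ∈ ksupp (trunc k x) := by rw [h]; exact hNdmem
      rw [mem_ksupp, mem_supp_trunc] at hNdx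
      have hcle : cnt x (i:ℕ) ≤ k := le_trans (cnt_mono x hi) hNdx.2
      rw [hXxi, Bool.true_and, decide_eq_true hcle] at hxi
      rw [hcase, ← X_coe d i]
      exact hxi
    · rw [Bool.not_eq_true] at hcase
      have hdf : d i = false := by
        rw [← h, show trunc k x i = (x i && decide (cnt x (i:ℕ) ≤ k)) from rfl,
          hcase, Bool.false_and]
      rw [hcase, hdf]

lemma forward_Vd (hc : CantorConds σ ℓ) {d : Cant} (hf : (ksupp d).Finite)
    {x : Cant} (hx : x ∈ Vd d) : hraw σ x ∈ Wb σ ℓ d := by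
  have h := (mem_Vd_iff hf x).mp hx
  have := hraw_mem_W hc x ((ksupp d).ncard)
  rwa [h] at this

lemma backward_Vd (hc : CantorConds σ ℓ) {d : Cant} (hf : (ksupp d).Finite)
    {x : Cant} (hW : hraw σ x ∈ Wb σ ℓ d) : x ∈ Vd d := by
  classical
  rw [mem_Vd_iff hf]
  set k := (ksupp d).ncard with hk_def
  by_contra hne
  by_cases hx : hasn k x
  · have hdisj := hc.2.2 k (trunc k x) d (supp_trunc_finite k x) (ncard_supp_trunc hx)
      hf rfl hne
    exact Set.disjoint_left.mp hdisj (hraw_mem_clW hc x k) (subset_closure hW)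
  · have hfx : (ksupp x).Finite := finite_of_not_hasn hx
    have hjk : (ksupp x).ncard < k := ncard_lt_of_not_hasn hx
    set j := (ksupp x).ncard with hj_def
    have htjx : trunc j x = x := trunc_eq_self_of_ncard_le hfx le_rfl
    have htkd : trunc k d = d := trunc_eq_self_of_ncard_le hf le_rfl
    have hsig : hraw σ x = σ x := hraw_eq_sigma hc hfx
    by_cases hall : ∀ m ≤ j, trunc m x = trunc m d
    · have htjd : trunc j d = x := by rw [← hall j le_rfl, htjx]
      have hdj1 : hasn (j+1) d := hasn_mono (by omega) (hasn_ncard hf)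
      have hdch := (dch_trunc hdj1).1
      rw [htjd] at hdch
      have hsub := hc.2.1 x hfx _ hdch
      have hWsub : hraw σ x ∈ closure (Wb σ ℓ (trunc (j+1) d)) := by
        apply chain_clW hc d (show j+1 ≤ k by omega)
        rw [htkd]
        exact subset_closure hW
      exact (hsub hWsub).2 (by rw [hsig]; exact Set.mem_singleton _)
    · push_neg at hall
      obtain ⟨m, hmj, hm⟩ := hall
      have hexm : ∃ m', trunc m' x ≠ trunc m' d := ⟨m, hm⟩
      set m₀ := Nat.find hexm with hm0_def
      have hspec : trunc m₀ x ≠ trunc m₀ d := Nat.find_spec hexm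
      have hm0le : m₀ ≤ m := Nat.find_min' hexm hm
      have hm01 : 1 ≤ m₀ := by
        rcases Nat.eq_zero_or_pos m₀ with h0 | h
        · rw [h0, trunc_zero_eq, trunc_zero_eq] at hspec
          exact absurd rfl hspec
        · omega
      have hxm : hasn m₀ x := hasn_mono (by omega) (hasn_ncard hfx)
      have hdm : hasn m₀ d := hasn_mono (by omega) (hasn_ncard hf)
      have hdisj := hc.2.2 m₀ (trunc m₀ x) (trunc m₀ d) (supp_trunc_finite m₀ x)
        (ncard_supp_trunc hxm) (supp_trunc_finite m₀ d) (ncard_supp_trunc hdm) hspec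
      have h1 := hraw_mem_clW hc x m₀
      have h2 : hraw σ x ∈ closure (Wb σ ℓ (trunc m₀ d)) := by
        apply chain_clW hc d (show m₀ ≤ k by omega)
        rw [htkd]
        exact subset_closure hW
      exact Set.disjoint_left.mp hdisj h1 h2

end CP

/-- There is a homeomorphism `h : C → K` with `h(d) = σ(d)` and `h[V_d] = K ∩ W(d)` for
every `d ∈ D`; in particular `K` is homeomorphic to the Cantor space `2^ℕ`. -/
theorem exists_homeomorph_cantor_Kset (σ : Cant → Plane) (ℓ : Cant → ℕ)
    (hc : CantorConds σ ℓ) :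
    ∃ h : Cant ≃ₜ (Kset σ ℓ),
      ∀ d : Cant, (ksupp d).Finite →
        ((h d : Plane) = σ d ∧
          Subtype.val '' (h '' Vd d) = Kset σ ℓ ∩ Wb σ ℓ d) := by
  classical
  have hcont : Continuous (CP.hraw σ) := CP.hraw_continuous hc
  have hmem : ∀ x, CP.hraw σ x ∈ Kset σ ℓ := CP.hraw_mem_K hc
  let f : Cant → Kset σ ℓ := fun x => ⟨CP.hraw σ x, hmem x⟩
  have hinj : Function.Injective f := fun a b h =>
    CP.hraw_injective hc (congrArg Subtype.val h)
  have hsurj : Function.Surjective f := by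
    rintro ⟨y, hy⟩
    obtain ⟨x, hx⟩ := CP.K_sub_range hc hcont hy
    exact ⟨x, Subtype.ext hx⟩
  let e : Cant ≃ Kset σ ℓ := Equiv.ofBijective f ⟨hinj, hsurj⟩
  have hfc : Continuous e := Continuous.subtype_mk hcont _
  refine ⟨hfc.homeoOfEquivCompactToT2, ?_⟩
  intro d hf
  have happ : ∀ x : Cant, ((hfc.homeoOfEquivCompactToT2 x : Kset σ ℓ) : Plane) = CP.hraw σ x :=
    fun x => rfl
  constructor
  · rw [happ d]
    exact CP.hraw_eq_sigma hc hf
  · ext y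
    simp only [Set.mem_image, Set.mem_inter_iff]
    constructor
    · rintro ⟨z, ⟨x, hxV, rfl⟩, rfl⟩
      rw [happ x]
      exact ⟨hmem x, CP.forward_Vd hc hf hxV⟩
    · rintro ⟨hyK, hyW⟩
      obtain ⟨x, hx⟩ := hsurj ⟨y, hyK⟩
      have hxy : CP.hraw σ x = y := congrArg Subtype.val hx
      refine ⟨hfc.homeoOfEquivCompactToT2 x,
        ⟨x, CP.backward_Vd hc hf (by rw [hxy]; exact hyW), rfl⟩, ?_⟩
      rw [happ x, hxy]
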